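/- Let k be a field of characteristic zero, A = A₀ ⊕ A₁ a graded algebra over k which is complex, and E = E₀ ⊕ E₁ a graded A-module. Then: (1) E is complex, i.e. E₀ and E₁ are isomorphic as A₀-modules (indeed multiplication by any invertible element a ∈ A₁ gives such an isomorphism E₀ → E₁); and (2) the natural A-module homomorphism A ⊗_{A₀} E₀ → E, a ⊗ e ↦ a·e, is an isomorphism. -/

import Mathlib

/-!
Lemma `a0e` of the paper: if the graded algebra `A` is complex, then every graded
`A`-module `E` is complex (multiplication by an invertible odd element of `A` gives
an isomorphism `E₀ → E₁`), and the natural map `A ⊗_{A₀} E₀ → E`, `a ⊗ e ↦ a • e`,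
is an isomorphism.  Here the subalgebra `A₀` is represented by a commutative ring
`R` mapping isomorphically onto the even part of `A`.
-/

open TensorProduct

/-- A (ℤ/2ℤ-)graded algebra over `k`. -/
structure GradedAlgebraStruct (k A : Type*) [CommSemiring k] [CommRing A] [Algebra k A] where
  deg : ZMod 2 → Submodule k A
  one_mem : (1 : A) ∈ deg 0
  mul_mem : ∀ i j : ZMod 2, ∀ a ∈ deg i, ∀ b ∈ deg j, a * b ∈ deg (i + j)
  isCompl_deg : IsCompl (deg 0) (deg 1)

/-- A graded algebra is complex if its odd part contains an invertible element. -/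
def GradedAlgebraStruct.IsComplex {k A : Type*} [CommSemiring k] [CommRing A] [Algebra k A]
    (G : GradedAlgebraStruct k A) : Prop :=
  ∃ a ∈ G.deg 1, IsUnit a

/-- A grading `E = E₀ ⊕ E₁` (by `k`-subspaces) on an `A`-module `E` compatible with
the grading of `A`: `Aᵢ • Eⱼ ⊆ E_{i+j}`. -/
structure GradedModuleStruct (k A : Type*) [CommSemiring k] [CommRing A] [Algebra k A]
    (G : GradedAlgebraStruct k A)
    (E : Type*) [AddCommGroup E] [Module A E] [Module k E] [IsScalarTower k A E] where
  deg : ZMod 2 → Submodule k E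
  smul_mem : ∀ i j : ZMod 2, ∀ a ∈ G.deg i, ∀ e ∈ deg j, a • e ∈ deg (i + j)
  isCompl_deg : IsCompl (deg 0) (deg 1)

/-- A graded module is complex if `E₀` and `E₁` are isomorphic as `A₀`-modules, i.e.
there is a `k`-linear isomorphism `E₀ ≃ E₁` commuting with the action of `A₀`. -/
def GradedModuleStruct.IsComplex {k A : Type*} [CommSemiring k] [CommRing A] [Algebra k A]
    {G : GradedAlgebraStruct k A}
    {E : Type*} [AddCommGroup E] [Module A E] [Module k E] [IsScalarTower k A E]
    (M : GradedModuleStruct k A G E) : Prop :=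
  ∃ f : (M.deg 0) ≃ₗ[k] (M.deg 1),
    ∀ a ∈ G.deg 0, ∀ x : M.deg 0, ∀ hx : a • (x : E) ∈ M.deg 0,
      ((f ⟨a • (x : E), hx⟩ : E)) = a • ((f x : E))

/-- The natural `R`-bilinear map `A × E₀ → E`, `(a, x) ↦ a • x`. -/
noncomputable def smulBilin (R A E : Type*) [CommRing R] [CommRing A] [Algebra R A]
    [AddCommGroup E] [Module A E] [Module R E] [IsScalarTower R A E]
    (E₀ : Submodule R E) : A →ₗ[R] (E₀ →ₗ[R] E) where
  toFun a :=
    { toFun := fun x => a • (x : E)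
      map_add' := fun x y => by simp [smul_add]
      map_smul' := fun r x => by simp [smul_comm r a] }
  map_add' := fun a b => by ext x; simp [add_smul]
  map_smul' := fun r a => by ext x; simp [smul_assoc]

set_option maxHeartbeats 1000000 in
theorem gradedModule_over_complex_gradedAlgebra
    {k A E R : Type*} [Field k] [CharZero k]
    [CommRing A] [Algebra k A] [FiniteDimensional k A] [IsSemisimpleRing A]
    [AddCommGroup E] [Module A E] [Module k E] [IsScalarTower k A E] [Module.Finite A E]
    [CommRing R] [Algebra k R] [Algebra R A] [IsScalarTower k R A]
    [Module R E] [IsScalarTower R A E]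
    (G : GradedAlgebraStruct k A) (hGc : G.IsComplex)
    (M : GradedModuleStruct k A G E)
    (hR : Function.Injective (algebraMap R A))
    (hR0 : Set.range (algebraMap R A) = (G.deg 0 : Set A))
    (E₀ : Submodule R E) (hE₀ : (E₀ : Set E) = (M.deg 0 : Set E)) :
    (∀ a ∈ G.deg 1, IsUnit a →
      ∃ f : (M.deg 0) ≃ₗ[k] (M.deg 1), ∀ x : M.deg 0, ((f x : E)) = a • (x : E)) ∧
    M.IsComplex ∧
    Function.Bijective (TensorProduct.lift (smulBilin R A E E₀)) := by
  classical
  have h10 : (1 : ZMod 2) + 0 = 1 := by decide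
  have h11 : (1 : ZMod 2) + 1 = 0 := by decide
  have h00 : (0 : ZMod 2) + 0 = 0 := by decide
  -- commuting of k-scalars with A-scalars on E
  have hcomm : ∀ (c : k) (y : A) (x : E), y • (c • x) = c • (y • x) := by
    intro c y x
    rw [← algebraMap_smul A c x, ← mul_smul, mul_comm, mul_smul, algebraMap_smul]
  -- the inverse of an odd unit is odd
  have hinv : ∀ a : A, a ∈ G.deg 1 → IsUnit a →
      ∃ b : A, a * b = 1 ∧ b * a = 1 ∧ b ∈ G.deg 1 := by
    intro a ha hu
    obtain ⟨u, rfl⟩ := hu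
    set b : A := ((u⁻¹ : Aˣ) : A) with hbdef
    have hab : (u : A) * b = 1 := u.mul_inv
    have hba : b * (u : A) = 1 := u.inv_mul
    have hbmem : b ∈ G.deg 0 ⊔ G.deg 1 := by
      rw [G.isCompl_deg.codisjoint.eq_top]; trivial
    obtain ⟨b₀, hb₀, b₁, hb₁, hsum⟩ := Submodule.mem_sup.mp hbmem
    have hub₀ : (u : A) * b₀ ∈ G.deg 1 := by
      have := G.mul_mem 1 0 _ ha _ hb₀; rwa [h10] at this
    have hub₁ : (u : A) * b₁ ∈ G.deg 0 := by
      have := G.mul_mem 1 1 _ ha _ hb₁; rwa [h11] at this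
    have hsum' : (u : A) * b₀ + (u : A) * b₁ = 1 := by
      rw [← mul_add, hsum, hab]
    have hub₀0 : (u : A) * b₀ ∈ G.deg 0 := by
      have : (u : A) * b₀ = 1 - (u : A) * b₁ := by
        rw [← hsum']; ring
      rw [this]
      exact Submodule.sub_mem _ G.one_mem hub₁
    have hzero : (u : A) * b₀ = 0 :=
      Submodule.disjoint_def.mp G.isCompl_deg.disjoint _ hub₀0 hub₀
    have hb₀0 : b₀ = 0 := by
      have : b * ((u : A) * b₀) = b₀ := by rw [← mul_assoc, hba, one_mul]
      rw [hzero, mul_zero] at this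
      exact this.symm
    have : b = b₁ := by rw [← hsum, hb₀0, zero_add]
    exact ⟨b, hab, hba, this ▸ hb₁⟩
  -- part 1
  have part1 : ∀ a ∈ G.deg 1, IsUnit a →
      ∃ f : (M.deg 0) ≃ₗ[k] (M.deg 1), ∀ x : M.deg 0, ((f x : E)) = a • (x : E) := by
    intro a ha hu
    obtain ⟨b, hab, hba, hb⟩ := hinv a ha hu
    refine ⟨{ toFun := fun x => ⟨a • (x : E), by
                have := M.smul_mem 1 0 a ha _ x.2; rwa [h10] at this⟩
              map_add' := fun x y => by ext; simp [smul_add]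
              map_smul' := fun c x => by ext; exact hcomm c a x
              invFun := fun y => ⟨b • (y : E), by
                have := M.smul_mem 1 1 b hb _ y.2; rwa [h11] at this⟩
              left_inv := fun x => by
                ext; simp only; rw [← mul_smul, hba, one_smul]
              right_inv := fun y => by
                ext; simp only; rw [← mul_smul, hab, one_smul] }, fun x => rfl⟩
  refine ⟨part1, ?_, ?_⟩
  · -- part 2 : M is complex
    obtain ⟨a, ha, hu⟩ := hGc
    obtain ⟨f, hf⟩ := part1 a ha hu
    refine ⟨f, ?_⟩
    intro a₀ ha₀ x hx
    rw [hf, hf]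
    show a • (a₀ • (x : E)) = a₀ • (a • (x : E))
    rw [← mul_smul, mul_comm, mul_smul]
  · -- part 3 : the natural map is bijective
    obtain ⟨a, ha, hu⟩ := hGc
    obtain ⟨b, hab, hba, hb⟩ := hinv a ha hu
    set L := TensorProduct.lift (smulBilin R A E E₀) with hLdef
    have hL : ∀ (x : A) (e : E₀), L (x ⊗ₜ[R] e) = x • (e : E) := fun x e => by
      rw [hLdef, TensorProduct.lift.tmul]; rfl
    have hmem : ∀ x : E, x ∈ E₀ ↔ x ∈ M.deg 0 := fun x => by
      constructor
      · intro h; have := hE₀ ▸ (show x ∈ (E₀ : Set E) from h); exact this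
      · intro h; have : x ∈ (E₀ : Set E) := hE₀ ▸ (show x ∈ (M.deg 0 : Set E) from h)
        exact this
    set π₀ := Submodule.linearProjOfIsCompl (M.deg 0) (M.deg 1) M.isCompl_deg with hπ₀
    set π₁ := Submodule.linearProjOfIsCompl (M.deg 1) (M.deg 0) M.isCompl_deg.symm with hπ₁
    have hbE : ∀ y : E, y ∈ M.deg 1 → b • y ∈ M.deg 0 := by
      intro y hy
      have := M.smul_mem 1 1 b hb _ hy; rwa [h11] at this
    -- the candidate inverse map
    set g : E → A ⊗[R] E₀ := fun e =>
      (1 : A) ⊗ₜ[R] (⟨(π₀ e : E), (hmem _).mpr (π₀ e).2⟩ : E₀)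
        + a ⊗ₜ[R] (⟨b • (π₁ e : E), (hmem _).mpr (hbE _ (π₁ e).2)⟩ : E₀) with hgdef
    have hgadd : ∀ e e' : E, g (e + e') = g e + g e' := by
      intro e e'
      have h0 : (⟨(π₀ (e + e') : E), (hmem _).mpr (π₀ (e + e')).2⟩ : E₀)
          = ⟨(π₀ e : E), (hmem _).mpr (π₀ e).2⟩ + ⟨(π₀ e' : E), (hmem _).mpr (π₀ e').2⟩ := by
        ext; simp [map_add]
      have h1 : (⟨b • (π₁ (e + e') : E), (hmem _).mpr (hbE _ (π₁ (e + e')).2)⟩ : E₀)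
          = ⟨b • (π₁ e : E), (hmem _).mpr (hbE _ (π₁ e).2)⟩
            + ⟨b • (π₁ e' : E), (hmem _).mpr (hbE _ (π₁ e').2)⟩ := by
        ext; simp [map_add, smul_add]
      rw [hgdef]; simp only [h0, h1, tmul_add]; abel
    -- key computation on pure tensors
    have hkey : ∀ (x : A) (e : E₀), g (x • (e : E)) = x ⊗ₜ[R] e := by
      intro x e
      set x₀ : A := (Submodule.linearProjOfIsCompl (G.deg 0) (G.deg 1) G.isCompl_deg x : A)
        with hx₀def
      set x₁ : A := (Submodule.linearProjOfIsCompl (G.deg 1) (G.deg 0) G.isCompl_deg.symm x : A)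
        with hx₁def
      have hx : x₀ + x₁ = x :=
        Submodule.projection_add_projection_eq_self G.isCompl_deg x
      have hx₀ : x₀ ∈ G.deg 0 :=
        (Submodule.linearProjOfIsCompl (G.deg 0) (G.deg 1) G.isCompl_deg x).2
      have hx₁ : x₁ ∈ G.deg 1 :=
        (Submodule.linearProjOfIsCompl (G.deg 1) (G.deg 0) G.isCompl_deg.symm x).2
      have he : (e : E) ∈ M.deg 0 := (hmem _).mp e.2
      have hx₀e : x₀ • (e : E) ∈ M.deg 0 := by
        have := M.smul_mem 0 0 x₀ hx₀ _ he; rwa [h00] at this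
      have hx₁e : x₁ • (e : E) ∈ M.deg 1 := by
        have := M.smul_mem 1 0 x₁ hx₁ _ he; rwa [h10] at this
      have hsmul : x • (e : E) = x₀ • (e : E) + x₁ • (e : E) := by
        rw [← hx, add_smul]
      have hπ₀e : π₀ (x • (e : E)) = ⟨x₀ • (e : E), hx₀e⟩ := by
        rw [hsmul, map_add]
        have e1 : π₀ (x₀ • (e : E)) = ⟨x₀ • (e : E), hx₀e⟩ :=
          Submodule.linearProjOfIsCompl_apply_left M.isCompl_deg ⟨x₀ • (e : E), hx₀e⟩
        have e2 : π₀ (x₁ • (e : E)) = 0 :=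
          Submodule.linearProjOfIsCompl_apply_right' M.isCompl_deg hx₁e
        rw [e1, e2, add_zero]
      have hπ₁e : π₁ (x • (e : E)) = ⟨x₁ • (e : E), hx₁e⟩ := by
        rw [hsmul, map_add]
        have e1 : π₁ (x₁ • (e : E)) = ⟨x₁ • (e : E), hx₁e⟩ :=
          Submodule.linearProjOfIsCompl_apply_left M.isCompl_deg.symm ⟨x₁ • (e : E), hx₁e⟩
        have e2 : π₁ (x₀ • (e : E)) = 0 :=
          Submodule.linearProjOfIsCompl_apply_right' M.isCompl_deg.symm hx₀e
        rw [e1, e2, zero_add]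
      obtain ⟨r, hr⟩ : ∃ r : R, algebraMap R A r = x₀ := by
        have : x₀ ∈ Set.range (algebraMap R A) := by rw [hR0]; exact hx₀
        exact this
      have hbx₁ : b * x₁ ∈ G.deg 0 := by
        have := G.mul_mem 1 1 b hb _ hx₁; rwa [h11] at this
      obtain ⟨s, hs⟩ : ∃ s : R, algebraMap R A s = b * x₁ := by
        have : b * x₁ ∈ Set.range (algebraMap R A) := by rw [hR0]; exact hbx₁
        exact this
      have c0 : (⟨((π₀ (x • (e : E))) : E), (hmem _).mpr (π₀ (x • (e : E))).2⟩ : E₀) = r • e := by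
        ext
        show ((π₀ (x • (e : E))) : E) = r • (e : E)
        rw [hπ₀e]
        show x₀ • (e : E) = r • (e : E)
        rw [← hr, algebraMap_smul]
      have c1 : (⟨b • ((π₁ (x • (e : E))) : E), (hmem _).mpr (hbE _ (π₁ (x • (e : E))).2)⟩ : E₀)
          = s • e := by
        ext
        show b • ((π₁ (x • (e : E))) : E) = s • (e : E)
        rw [hπ₁e]
        show b • (x₁ • (e : E)) = s • (e : E)
        rw [← mul_smul, ← hs, algebraMap_smul]
      have t0 : (1 : A) ⊗ₜ[R] (r • e) = x₀ ⊗ₜ[R] e := by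
        rw [← TensorProduct.smul_tmul]
        congr 1
        rw [Algebra.smul_def, mul_one, hr]
      have t1 : a ⊗ₜ[R] (s • e) = x₁ ⊗ₜ[R] e := by
        rw [← TensorProduct.smul_tmul]
        congr 1
        rw [Algebra.smul_def, hs, mul_comm b x₁, mul_assoc, hba, mul_one]
      rw [hgdef]
      simp only [c0, c1, t0, t1, ← add_tmul, hx]
    have hLg : ∀ e : E, L (g e) = e := by
      intro e
      rw [hgdef]
      simp only [map_add, hL]
      show (1 : A) • ((π₀ e : E)) + a • (b • ((π₁ e : E))) = e
      rw [one_smul, ← mul_smul, hab, one_smul]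
      exact Submodule.projection_add_projection_eq_self M.isCompl_deg e
    have hgL : ∀ t : A ⊗[R] E₀, g (L t) = t := by
      intro t
      induction t using TensorProduct.induction_on with
      | zero =>
          rw [map_zero]
          rw [hgdef]
          have z0 : (⟨((π₀ (0 : E)) : E), (hmem _).mpr (π₀ (0 : E)).2⟩ : E₀) = 0 := by
            ext; simp
          have z1 : (⟨b • ((π₁ (0 : E)) : E), (hmem _).mpr (hbE _ (π₁ (0 : E)).2)⟩ : E₀)
              = 0 := by
            ext; simp
          simp only [z0, z1, tmul_zero, add_zero]
      | tmul x e => rw [hL]; exact hkey x e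
      | add s t hs ht => rw [map_add, hgadd, hs, ht]
    constructor
    · intro t t' htt
      rw [← hgL t, ← hgL t', htt]
    · intro e
      exact ⟨g e, hLg e⟩
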